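/- Let G = (X, Y, E) be a Y-convex bipartite graph with Y = {y_1 < ⋯ < y_m} that admits a red dominating set, with X in lex-convex ordering. Call a finite strictly increasing sequence u_1 < u_2 < ⋯ < u_k of X a valid chain if left(u_1) = y_1, right(u_k) = y_m, and left(u_i) < left(u_{i+1}) ≤ right(u_i) + 1 ≤ right(u_{i+1}) for each i = 1, …, k−1, and let k* be the minimum length of a valid chain. Then the map sending a set to its increasing enumeration is a bijection between the minimum cardinality red dominating sets of G and the valid chains of length k*; in particular, the number of MCRD sets of G equals the number of valid chains of length k*. -/

import Mathlib

/-- A valid chain in the `Y`-convex bipartite graph with `X = Fin n`, `Y = Fin (m+1)`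
and interval neighbourhoods `[l x, r x]`: a nonempty strictly increasing list
`u_1 < ⋯ < u_k` of vertices of `X` with `left(u_1) = y_1`, `right(u_k) = y_m`, and
`left(u_i) < left(u_{i+1}) ≤ right(u_i) + 1 ≤ right(u_{i+1})` for all `i`. -/
def ValidChain {n m : ℕ} (l r : Fin n → Fin (m + 1)) (L : List (Fin n)) : Prop :=
  ∃ hne : L ≠ [],
    L.Chain' (· < ·) ∧
    l (L.head hne) = 0 ∧
    r (L.getLast hne) = Fin.last m ∧
    L.Chain' fun a b =>
      l a < l b ∧ (l b : ℕ) ≤ (r a : ℕ) + 1 ∧ (r a : ℕ) + 1 ≤ (r b : ℕ)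

section Aux

variable {n m : ℕ} (l r : Fin n → Fin (m + 1))

/-- A chain's intervals cover everything between the head's left end and the
last's right end. -/
lemma chain_cover : ∀ (L : List (Fin n)) (hne : L ≠ []),
    L.Chain' (fun a b =>
      l a < l b ∧ (l b : ℕ) ≤ (r a : ℕ) + 1 ∧ (r a : ℕ) + 1 ≤ (r b : ℕ)) →
    ∀ y : Fin (m + 1), l (L.head hne) ≤ y → y ≤ r (L.getLast hne) →
    ∃ x ∈ L, l x ≤ y ∧ y ≤ r x := by
  intro L
  induction L with
  | nil => intro hne; exact absurd rfl hne
  | cons a L' ih =>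
    intro hne hch y h1 h2
    match L', hch with
    | [], _ =>
      exact ⟨a, List.mem_cons_self, h1, h2⟩
    | b :: L'', hch =>
      rcases List.isChain_cons_cons.mp hch with ⟨⟨_, hlb, _⟩, hch'⟩
      by_cases hy : y ≤ r a
      · exact ⟨a, List.mem_cons_self, h1, hy⟩
      · push_neg at hy
        have hby : l b ≤ y := by
          rw [Fin.le_def]
          have : (r a : ℕ) < (y : ℕ) := hy
          omega
        have h2' : y ≤ r ((b :: L'').getLast (by simp)) := by
          rwa [List.getLast_cons (by simp)] at h2
        obtain ⟨x, hx, hxy⟩ := ih (by simp) hch' y hby h2'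
        exact ⟨x, List.mem_cons_of_mem _ hx, hxy⟩

variable (hlr : ∀ x, l x ≤ r x)
    (hlex : ∀ i j : Fin n, i < j → l i < l j ∨ (l i = l j ∧ r i ≤ r j))

include hlex in
lemma lmono : ∀ a b : Fin n, a ≤ b → l a ≤ l b := by
  intro a b hab
  rcases eq_or_lt_of_le hab with h | h
  · exact le_of_eq (by rw [h])
  · rcases hlex a b h with h' | ⟨h', _⟩
    · exact le_of_lt h'
    · exact le_of_eq h'

include hlex in
/-- In a minimum dominating set, both `l` and `r` are strictly increasing. -/
lemma min_pairwise {D : Finset (Fin n)}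
    (hD : ∀ y : Fin (m + 1), ∃ x ∈ D, l x ≤ y ∧ y ≤ r x)
    (hmin : ∀ D' : Finset (Fin n),
      (∀ y : Fin (m + 1), ∃ x ∈ D', l x ≤ y ∧ y ≤ r x) → D.card ≤ D'.card)
    {a b : Fin n} (ha : a ∈ D) (hb : b ∈ D) (hab : a < b) :
    l a < l b ∧ r a < r b := by
  -- helper: erasing a redundant element contradicts minimality
  have key : ∀ x x' : Fin n, x ∈ D → x' ∈ D → x ≠ x' → l x' ≤ l x → r x ≤ r x' → False := by
    intro x x' hx hx' hne h1 h2
    have hdom' : ∀ y : Fin (m + 1), ∃ z ∈ D.erase x, l z ≤ y ∧ y ≤ r z := by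
      intro y
      obtain ⟨t, ht, ht1, ht2⟩ := hD y
      by_cases htx : t = x
      · exact ⟨x', Finset.mem_erase.mpr ⟨Ne.symm hne, hx'⟩,
          le_trans h1 (htx ▸ ht1), le_trans (htx ▸ ht2) h2⟩
      · exact ⟨t, Finset.mem_erase.mpr ⟨htx, ht⟩, ht1, ht2⟩
    have := hmin _ hdom'
    rw [Finset.card_erase_of_mem hx] at this
    have hpos : 0 < D.card := Finset.card_pos.mpr ⟨x, hx⟩
    omega
  rcases hlex a b hab with h | ⟨h1, h2⟩
  · refine ⟨h, ?_⟩
    by_contra hc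
    push_neg at hc
    exact key b a hb ha (ne_of_gt hab) (le_of_lt h) hc
  · exact absurd (key a b ha hb (ne_of_lt hab) (le_of_eq h1.symm) h2) (by simp)

include hlex in
/-- The sorted enumeration of a minimum dominating set is a valid chain. -/
lemma min_chain {D : Finset (Fin n)}
    (hD : ∀ y : Fin (m + 1), ∃ x ∈ D, l x ≤ y ∧ y ≤ r x)
    (hmin : ∀ D' : Finset (Fin n),
      (∀ y : Fin (m + 1), ∃ x ∈ D', l x ≤ y ∧ y ≤ r x) → D.card ≤ D'.card) :
    ValidChain l r (D.sort (· ≤ ·)) := by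
  set L := D.sort (· ≤ ·) with hL
  have hslt : L.Pairwise (· < ·) := (Finset.sortedLT_sort D).pairwise
  have hmemL : ∀ x, x ∈ L ↔ x ∈ D := fun x => Finset.mem_sort _
  have hDne : D.Nonempty := by
    obtain ⟨x, hx, _⟩ := hD 0; exact ⟨x, hx⟩
  have hne : L ≠ [] := by
    intro h
    have hlen : L.length = D.card := Finset.length_sort _
    rw [h] at hlen
    simp only [List.length_nil] at hlen
    have := hDne.card_pos
    omega
  refine ⟨hne, List.isChain_iff_pairwise.mpr hslt, ?_, ?_, ?_⟩
  · -- l head = 0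
    have hhead : L.head hne ∈ D := (hmemL _).mp (List.head_mem hne)
    obtain ⟨t, ht, ht1, _⟩ := hD 0
    have htz : l t = 0 := Fin.le_zero_iff.mp ht1
    have hht : L.head hne ≤ t := by
      have htL : t ∈ L := (hmemL t).mpr ht
      obtain ⟨L', hL'⟩ : ∃ L', L = L.head hne :: L' := ⟨L.tail, (List.cons_head_tail hne).symm⟩
      rw [hL'] at htL hslt
      rcases List.mem_cons.mp htL with h | h
      · exact le_of_eq h.symm
      · exact le_of_lt (List.rel_of_pairwise_cons hslt h)
    have := lmono l r hlex _ _ hht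
    rw [htz] at this
    exact Fin.le_zero_iff.mp this
  · -- r last = Fin.last m
    have hlast : L.getLast hne ∈ D := (hmemL _).mp (List.getLast_mem hne)
    obtain ⟨t, ht, _, ht2⟩ := hD (Fin.last m)
    have htm : r t = Fin.last m := le_antisymm (Fin.le_last _) ht2
    have hht : t ≤ L.getLast hne := by
      have htL : t ∈ L := (hmemL t).mpr ht
      rcases List.mem_iff_get.mp htL with ⟨k, hk⟩
      have hlastget : L.getLast hne = L.get ⟨L.length - 1, by
          have := List.length_pos_iff.mpr hne; omega⟩ := by simp [List.getLast_eq_getElem]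
      rw [hlastget, ← hk]
      rcases lt_or_eq_of_le (Nat.le_sub_one_of_lt k.2) with h | h
      · exact le_of_lt (hslt.sortedLT.strictMono_get (by exact h))
      · exact le_of_eq (congrArg L.get (Fin.ext h))
    rcases eq_or_lt_of_le hht with h | h
    · rw [← h, htm]
    · have := (min_pairwise l r hlex hD hmin ht hlast h).2
      rw [htm] at this
      exact absurd (lt_of_le_of_lt (Fin.le_last _) this) (lt_irrefl _)
  · -- chain condition
    refine List.isChain_iff_getElem.mpr ?_
    intro i hi
    set a := L.get ⟨i, by omega⟩ with hadef
    set b := L.get ⟨i + 1, by omega⟩ with hbdef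
    change l a < l b ∧ (l b : ℕ) ≤ (r a : ℕ) + 1 ∧ (r a : ℕ) + 1 ≤ (r b : ℕ)
    have hab : a < b := hslt.sortedLT.strictMono_get (by simp [Fin.lt_def])
    have haD : a ∈ D := (hmemL a).mp (List.get_mem _ _)
    have hbD : b ∈ D := (hmemL b).mp (List.get_mem _ _)
    obtain ⟨h1, h2⟩ := min_pairwise l r hlex hD hmin haD hbD hab
    refine ⟨h1, ?_, h2⟩
    -- l b ≤ r a + 1
    by_contra hc
    push_neg at hc
    have hram : (r a : ℕ) + 1 < m + 1 := by have := (l b).isLt; omega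
    set p : Fin (m + 1) := ⟨(r a : ℕ) + 1, hram⟩ with hp
    obtain ⟨t, ht, ht1, ht2⟩ := hD p
    have hat : a < t := by
      rcases lt_trichotomy t a with h | h | h
      · exfalso
        have hrt : (r t : ℕ) < (r a : ℕ) := (min_pairwise l r hlex hD hmin ht haD h).2
        have h2' : (r a : ℕ) + 1 ≤ (r t : ℕ) := Fin.le_def.mp ht2
        omega
      · exfalso
        rw [h] at ht2
        have h2' : (r a : ℕ) + 1 ≤ (r a : ℕ) := Fin.le_def.mp ht2
        omega
      · exact h
    have hbt : b ≤ t := by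
      have htL : t ∈ L := (hmemL t).mpr ht
      rcases List.mem_iff_get.mp htL with ⟨k, hk⟩
      have hik : (⟨i, by omega⟩ : Fin L.length) < k := by
        rw [← hk] at hat
        exact hslt.sortedLT.strictMono_get.lt_iff_lt.mp hat
      have : i + 1 ≤ (k : ℕ) := hik
      rw [hbdef, ← hk]
      rcases lt_or_eq_of_le this with h | h
      · exact le_of_lt (hslt.sortedLT.strictMono_get (by exact h))
      · exact le_of_eq (congrArg L.get (Fin.ext h))
    have hlbt : l b ≤ l t := lmono l r hlex _ _ hbt
    have : (l b : ℕ) ≤ (p : ℕ) := le_trans hlbt ht1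
    simp [hp] at this
    omega

end Aux

/-- Let `G` be a `Y`-convex bipartite graph (`X = Fin n`, `Y = Fin (m+1)`, interval
neighbourhoods `[l x, r x]`) admitting a red dominating set, with `X` in lex-convex
ordering, and let `k*` be the minimum length of a valid chain.  Then the map sending a
set to its increasing enumeration is a bijection from the minimum cardinality red
dominating sets of `G` onto the valid chains of length `k*`; in particular the number
of MCRD sets equals the number of valid chains of length `k*`. -/
theorem stmt12 {n m : ℕ} (l r : Fin n → Fin (m + 1)) (hlr : ∀ x, l x ≤ r x)
    (hlex : ∀ i j : Fin n, i < j → l i < l j ∨ (l i = l j ∧ r i ≤ r j))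
    (hdom : ∃ D : Finset (Fin n), ∀ y : Fin (m + 1), ∃ x ∈ D, l x ≤ y ∧ y ≤ r x)
    (kstar : ℕ)
    (hks : IsLeast {j : ℕ | ∃ L : List (Fin n), ValidChain l r L ∧ L.length = j} kstar) :
    Set.BijOn (fun D : Finset (Fin n) => D.sort (· ≤ ·))
      {D : Finset (Fin n) | (∀ y : Fin (m + 1), ∃ x ∈ D, l x ≤ y ∧ y ≤ r x) ∧
        ∀ D' : Finset (Fin n),
          (∀ y : Fin (m + 1), ∃ x ∈ D', l x ≤ y ∧ y ≤ r x) → D.card ≤ D'.card}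
      {L : List (Fin n) | ValidChain l r L ∧ L.length = kstar} := by
  classical
  obtain ⟨D0, hD0⟩ := hdom
  set S : Set ℕ := {k | ∃ D : Finset (Fin n),
      (∀ y : Fin (m + 1), ∃ x ∈ D, l x ≤ y ∧ y ≤ r x) ∧ D.card = k} with hS
  have hSne : S.Nonempty := ⟨D0.card, D0, hD0, rfl⟩
  obtain ⟨Dmin, hDminDom, hDminCard⟩ := Nat.sInf_mem hSne
  have hmin : ∀ D' : Finset (Fin n),
      (∀ y : Fin (m + 1), ∃ x ∈ D', l x ≤ y ∧ y ≤ r x) → Dmin.card ≤ D'.card := by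
    intro D' hD'
    rw [hDminCard]
    exact Nat.sInf_le ⟨D', hD', rfl⟩
  have chainDom : ∀ L : List (Fin n), ValidChain l r L →
      (∀ y : Fin (m + 1), ∃ x ∈ L.toFinset, l x ≤ y ∧ y ≤ r x) ∧
        L.toFinset.card = L.length := by
    intro L hL
    obtain ⟨hne, hlt, hh, hlast, hch⟩ := hL
    have hnd : L.Nodup := (List.isChain_iff_pairwise.mp hlt).nodup
    refine ⟨fun y => ?_, List.toFinset_card_of_nodup hnd⟩
    obtain ⟨x, hx, h⟩ := chain_cover l r L hne hch y
      (by rw [hh]; exact Fin.zero_le y) (by rw [hlast]; exact Fin.le_last y)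
    exact ⟨x, List.mem_toFinset.mpr hx, h⟩
  have h1 : kstar ≤ sInf S := by
    have hchain := min_chain l r hlex hDminDom hmin
    have := hks.2 ⟨_, hchain, rfl⟩
    rwa [Finset.length_sort, hDminCard] at this
  obtain ⟨L0, hL0, hL0len⟩ := hks.1
  have h2 : sInf S ≤ kstar := by
    rw [← hL0len, ← (chainDom L0 hL0).2]
    exact Nat.sInf_le ⟨_, (chainDom L0 hL0).1, rfl⟩
  have hkc : sInf S = kstar := le_antisymm h2 h1
  refine ⟨?_, ?_, ?_⟩
  · intro D hDset
    obtain ⟨hDdom, hDmin⟩ := hDset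
    refine ⟨min_chain l r hlex hDdom hDmin, ?_⟩
    rw [Finset.length_sort]
    have hle : D.card ≤ Dmin.card := hDmin _ hDminDom
    have hge : Dmin.card ≤ D.card := hmin _ hDdom
    omega
  · intro D1 _ D2 _ heq
    have := congrArg List.toFinset heq
    simpa [Finset.sort_toFinset] using this
  · intro L hLset
    obtain ⟨hLvc, hLlen⟩ := hLset
    refine ⟨L.toFinset, ⟨(chainDom L hLvc).1, fun D' hD' => ?_⟩, ?_⟩
    · have : sInf S ≤ D'.card := Nat.sInf_le ⟨D', hD', rfl⟩
      rw [(chainDom L hLvc).2, hLlen, ← hkc]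
      exact this
    · obtain ⟨hne, hlt, _, _, _⟩ := hLvc
      have hnd : L.Nodup := (List.isChain_iff_pairwise.mp hlt).nodup
      have hsorted : L.Pairwise (· ≤ ·) :=
        (List.isChain_iff_pairwise.mp hlt).imp le_of_lt
      exact (List.toFinset_sort _ hnd).mpr hsorted
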